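/- The binary relation ≤_MM on probability measures on ℝ with finite first moment, defined by μ ≤_MM ν if and only if there exists a measurable function f : ℝ → ℝ such that for Y with law ν, f(Y) has law μ and E[Y | f(Y)] = f(Y), is a partial order (reflexive, antisymmetric, and transitive). -/

import Mathlib

open MeasureTheory ProbabilityTheory Filter Topology

noncomputable section

/-- Convex order on measures on ℝ. -/
def ConvexOrder (μ ν : Measure ℝ) : Prop :=
  ∀ φ : ℝ → ℝ, ConvexOn ℝ Set.univ φ → Integrable φ μ → Integrable φ ν →
    ∫ x, φ x ∂μ ≤ ∫ x, φ x ∂ν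

/-- Extended convex order (nonnegative convex test functions). -/
def ExtConvexOrder (μ ν : Measure ℝ) : Prop :=
  ∀ φ : ℝ → ℝ, ConvexOn ℝ Set.univ φ → (∀ x, 0 ≤ φ x) → Integrable φ μ → Integrable φ ν →
    ∫ x, φ x ∂μ ≤ ∫ x, φ x ∂ν

/-- π is a coupling of μ and ν. -/
def IsCoupling (π : Measure (ℝ × ℝ)) (μ ν : Measure ℝ) : Prop :=
  π.map Prod.fst = μ ∧ π.map Prod.snd = ν

/-- π is a martingale coupling: a coupling with E[Y|X] = X. -/
def IsMartingaleCoupling (π : Measure (ℝ × ℝ)) (μ ν : Measure ℝ) : Prop :=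
  IsCoupling π μ ν ∧
  ∀ A : Set ℝ, MeasurableSet A →
    ∫ p in (A ×ˢ (Set.univ : Set ℝ)), p.2 ∂π = ∫ p in (A ×ˢ (Set.univ : Set ℝ)), p.1 ∂π

/-- π is a backward Monge transport over the second marginal ν. -/
def IsBackwardMonge (π : Measure (ℝ × ℝ)) (ν : Measure ℝ) : Prop :=
  ∃ h : ℝ → ℝ, Measurable h ∧ π = ν.map (fun y => (h y, y))

/-- f is a backward Monge martingale transport map from ν to f_#ν:
E[Y | f(Y)] = f(Y) where Y ∼ ν. -/
def IsBMMTMap (f : ℝ → ℝ) (ν : Measure ℝ) : Prop :=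
  Measurable f ∧ ∀ A : Set ℝ, MeasurableSet A →
    ∫ y in f ⁻¹' A, y ∂ν = ∫ y in f ⁻¹' A, f y ∂ν

/-- μ ≤_MM ν : existence of a backward Monge martingale transport from μ to ν. -/
def leMM (μ ν : Measure ℝ) : Prop := ∃ f : ℝ → ℝ, IsBMMTMap f ν ∧ ν.map f = μ

/-- θ is the shadow of μ in ν: the ≤_cx-minimal measure θ with μ ≤_cx θ ≤ ν. -/
def IsShadow (ν μ θ : Measure ℝ) : Prop :=
  ConvexOrder μ θ ∧ θ ≤ ν ∧
    ∀ θ' : Measure ℝ, ConvexOrder μ θ' → θ' ≤ ν → ConvexOrder θ θ'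

end

section Aux

open MeasureTheory

variable {μ ν : Measure ℝ}

noncomputable def callF (μ : Measure ℝ) (a : ℝ) : ℝ := ∫ x, max (x - a) 0 ∂μ

lemma call_integrable [IsFiniteMeasure μ] (hμ : Integrable (fun x => x) μ) (a : ℝ) :
    Integrable (fun x => max (x - a) 0) μ :=
  (hμ.sub (integrable_const a)).pos_part

/-- pointwise lower bound for the difference of call payoffs -/
lemma call_diff_lb (a h x : ℝ) :
    Set.indicator (Set.Ici (a + h)) (fun _ => h) x
      ≤ max (x - a) 0 - max (x - (a + h)) 0 := by
  rcases le_or_gt (a + h) x with hx | hx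
  · rw [Set.indicator_of_mem (Set.mem_Ici.mpr hx)]
    rcases le_or_gt h 0 with h0 | h0
    · have : max (x - (a+h)) 0 ≤ max (x - a) 0 - h := by
        rcases le_or_gt (x - (a+h)) 0 with h1 | h1
        · rw [max_eq_right h1]
          nlinarith [le_max_right (x - a) (0:ℝ)]
        · rw [max_eq_left h1.le]
          nlinarith [le_max_left (x - a) (0:ℝ)]
      linarith
    · rw [max_eq_left (by linarith), max_eq_left (by linarith)]
      linarith
  · rw [Set.indicator_of_notMem (by simpa using hx)]
    have h1 : max (x - (a + h)) 0 = 0 := max_eq_right (by linarith)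
    have h2 : (0:ℝ) ≤ max (x - a) 0 := le_max_right _ _
    linarith

/-- pointwise upper bound for the difference of call payoffs -/
lemma call_diff_ub {h : ℝ} (hh : 0 ≤ h) (a x : ℝ) :
    max (x - a) 0 - max (x - (a + h)) 0
      ≤ Set.indicator (Set.Ioi a) (fun _ => h) x := by
  rcases le_or_gt x a with hx | hx
  · rw [Set.indicator_of_notMem (by simpa using hx)]
    rw [max_eq_right (by linarith)]
    have : (0:ℝ) ≤ max (x - (a + h)) 0 := le_max_right _ _
    linarith
  · rw [Set.indicator_of_mem (Set.mem_Ioi.mpr hx)]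
    rw [max_eq_left (by linarith)]
    rcases le_or_gt (x - (a + h)) 0 with h1 | h1
    · rw [max_eq_right h1]; linarith
    · rw [max_eq_left h1.le]; linarith

lemma callF_diff_lb [IsFiniteMeasure μ] (hμ : Integrable (fun x => x) μ) (a h : ℝ) :
    h * (μ (Set.Ici (a + h))).toReal ≤ callF μ a - callF μ (a + h) := by
  have hint1 := call_integrable hμ a
  have hint2 := call_integrable hμ (a + h)
  have hI : Integrable (Set.indicator (Set.Ici (a + h)) (fun _ => h)) μ :=
    (integrable_const h).indicator measurableSet_Ici
  have key : ∫ x, (max (x - a) 0 - max (x - (a + h)) 0) ∂μ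
      = callF μ a - callF μ (a + h) := integral_sub hint1 hint2
  have := integral_mono (g := fun x => max (x - a) 0 - max (x - (a + h)) 0)
    hI (hint1.sub hint2) (call_diff_lb a h)
  rw [integral_indicator_const h measurableSet_Ici, key] at this
  show h * μ.real (Set.Ici (a + h)) ≤ callF μ a - callF μ (a + h)
  simpa [mul_comm, smul_eq_mul] using this

lemma callF_diff_ub [IsFiniteMeasure μ] (hμ : Integrable (fun x => x) μ) (a : ℝ)
    {h : ℝ} (hh : 0 ≤ h) :
    callF μ a - callF μ (a + h) ≤ h * (μ (Set.Ioi a)).toReal := by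
  have hint1 := call_integrable hμ a
  have hint2 := call_integrable hμ (a + h)
  have hI : Integrable (Set.indicator (Set.Ioi a) (fun _ => h)) μ :=
    (integrable_const h).indicator measurableSet_Ioi
  have key : ∫ x, (max (x - a) 0 - max (x - (a + h)) 0) ∂μ
      = callF μ a - callF μ (a + h) := integral_sub hint1 hint2
  have := integral_mono (f := fun x => max (x - a) 0 - max (x - (a + h)) 0)
    (hint1.sub hint2) hI (call_diff_ub hh a)
  rw [integral_indicator_const h measurableSet_Ioi, key] at this
  show callF μ a - callF μ (a + h) ≤ h * μ.real (Set.Ioi a)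
  simpa [mul_comm, smul_eq_mul] using this

lemma Ioi_le_of_callF [IsProbabilityMeasure μ] [IsProbabilityMeasure ν]
    (hμ : Integrable (fun x => x) μ) (hν : Integrable (fun x => x) ν)
    (hF : ∀ a, callF μ a = callF ν a) (a : ℝ) :
    μ (Set.Ioi a) ≤ ν (Set.Ioi a) := by
  rw [← ENNReal.toReal_le_toReal (measure_ne_top _ _) (measure_ne_top _ _)]
  have hbound : ∀ n : ℕ, (μ (Set.Ici (a + 1/(n+1:ℝ)))).toReal ≤ (ν (Set.Ioi a)).toReal := by
    intro n
    have hpos : (0:ℝ) < 1/(n+1:ℝ) := by positivity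
    have h1 := callF_diff_lb hμ a (1/(n+1:ℝ))
    have h2 := callF_diff_ub hν a hpos.le
    rw [hF a, hF (a + 1/(n+1:ℝ))] at h1
    have := h1.trans h2
    exact le_of_mul_le_mul_left (by linarith) hpos
  have hmono : Monotone (fun n : ℕ => Set.Ici (a + 1/(n+1:ℝ))) := by
    intro n m hnm
    apply Set.Ici_subset_Ici.mpr
    have : (1:ℝ)/(m+1) ≤ 1/(n+1) := by
      apply one_div_le_one_div_of_le (by positivity)
      exact_mod_cast by omega
    linarith
  have hUnion : (⋃ n : ℕ, Set.Ici (a + 1/(n+1:ℝ))) = Set.Ioi a := by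
    ext x
    simp only [Set.mem_iUnion, Set.mem_Ici, Set.mem_Ioi]
    constructor
    · rintro ⟨n, hn⟩
      have : (0:ℝ) < 1/(n+1:ℝ) := by positivity
      linarith
    · intro hx
      obtain ⟨n, hn⟩ := exists_nat_one_div_lt (show (0:ℝ) < x - a by linarith)
      exact ⟨n, by linarith⟩
  have htend : Tendsto (fun n : ℕ => (μ (Set.Ici (a + 1/(n+1:ℝ)))).toReal) atTop
      (𝓝 ((μ (Set.Ioi a)).toReal)) := by
    have h1 := tendsto_measure_iUnion_atTop (μ := μ) hmono
    rw [hUnion] at h1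
    exact (ENNReal.tendsto_toReal (measure_ne_top _ _)).comp h1
  exact le_of_tendsto' htend hbound

lemma ext_of_callF [IsProbabilityMeasure μ] [IsProbabilityMeasure ν]
    (hμ : Integrable (fun x => x) μ) (hν : Integrable (fun x => x) ν)
    (hF : ∀ a, callF μ a = callF ν a) : μ = ν := by
  have hIoi : ∀ a, μ (Set.Ioi a) = ν (Set.Ioi a) := fun a =>
    le_antisymm (Ioi_le_of_callF hμ hν hF a)
      (Ioi_le_of_callF hν hμ (fun b => (hF b).symm) a)
  apply Measure.ext_of_Iic
  intro a
  have h1 : μ (Set.Iic a) = 1 - μ (Set.Ioi a) := by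
    rw [← Set.compl_Ioi, measure_compl measurableSet_Ioi (measure_ne_top _ _), measure_univ]
  have h2 : ν (Set.Iic a) = 1 - ν (Set.Ioi a) := by
    rw [← Set.compl_Ioi, measure_compl measurableSet_Ioi (measure_ne_top _ _), measure_univ]
  rw [h1, h2, hIoi a]

/-- leMM implies domination of call functions. -/
lemma callF_le_of_leMM [IsProbabilityMeasure ν]
    (hμ : Integrable (fun x => x) μ) (hν : Integrable (fun x => x) ν)
    (hle : leMM μ ν) (a : ℝ) : callF μ a ≤ callF ν a := by
  obtain ⟨f, ⟨hf, hmart⟩, hmap⟩ := hle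
  have hintf : Integrable f ν := by
    have := (integrable_map_measure (f := f) (g := fun x => x)
      aestronglyMeasurable_id hf.aemeasurable).mp (by rw [hmap]; exact hμ)
    exact this
  set S : Set ℝ := f ⁻¹' Set.Ioi a with hS
  have hSmeas : MeasurableSet S := hf measurableSet_Ioi
  have step1 : callF μ a = ∫ y, max (f y - a) 0 ∂ν := by
    rw [callF, ← hmap, integral_map hf.aemeasurable]
    exact ((measurable_id.sub_const a).max measurable_const).aestronglyMeasurable
  have hind : ∀ y, max (f y - a) 0 = S.indicator (fun y => f y - a) y := by
    intro y
    by_cases hy : y ∈ S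
    · rw [Set.indicator_of_mem hy]
      refine max_eq_left ?_
      have : a < f y := hy
      linarith
    · rw [Set.indicator_of_notMem hy]
      refine max_eq_right ?_
      have : f y ≤ a := by simpa [S] using hy
      linarith
  have step2 : ∫ y, max (f y - a) 0 ∂ν = ∫ y in S, (f y - a) ∂ν := by
    simp_rw [hind]
    exact integral_indicator hSmeas
  have step3 : ∫ y in S, (f y - a) ∂ν = ∫ y in S, (y - a) ∂ν := by
    rw [integral_sub hintf.integrableOn (integrable_const a).integrableOn,
        integral_sub hν.integrableOn (integrable_const a).integrableOn,
        ← (hmart (Set.Ioi a) measurableSet_Ioi)]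
  have step4 : ∫ y in S, (y - a) ∂ν ≤ ∫ y in S, max (y - a) 0 ∂ν := by
    apply setIntegral_mono_on (hν.integrableOn.sub (integrable_const a).integrableOn)
      (call_integrable hν a).integrableOn hSmeas
    intro x _
    exact le_max_left _ _
  have step5 : ∫ y in S, max (y - a) 0 ∂ν ≤ callF ν a := by
    apply setIntegral_le_integral (call_integrable hν a)
    filter_upwards with x using le_max_right _ _
  rw [step1, step2, step3]
  exact step4.trans step5

end Aux

open MeasureTheory in
theorem stmt2 :
    (∀ μ : Measure ℝ, IsProbabilityMeasure μ → Integrable (fun x => x) μ → leMM μ μ) ∧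
    (∀ μ ν : Measure ℝ, IsProbabilityMeasure μ → IsProbabilityMeasure ν →
      Integrable (fun x => x) μ → Integrable (fun x => x) ν →
      leMM μ ν → leMM ν μ → μ = ν) ∧
    (∀ η μ ν : Measure ℝ, IsProbabilityMeasure η → IsProbabilityMeasure μ →
      IsProbabilityMeasure ν →
      Integrable (fun x => x) η → Integrable (fun x => x) μ → Integrable (fun x => x) ν →
      leMM η μ → leMM μ ν → leMM η ν) := by
  refine ⟨?_, ?_, ?_⟩
  · -- reflexivity
    intro μ _ _
    exact ⟨id, ⟨measurable_id, fun A _ => rfl⟩, Measure.map_id⟩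
  · -- antisymmetry
    intro μ ν hμp hνp hμi hνi h1 h2
    exact ext_of_callF hμi hνi fun a =>
      le_antisymm (callF_le_of_leMM hμi hνi h1 a) (callF_le_of_leMM hνi hμi h2 a)
  · -- transitivity
    intro η μ ν hηp hμp hνp hηi hμi hνi h1 h2
    obtain ⟨f, ⟨hf, hmartf⟩, hmapf⟩ := h1
    obtain ⟨g, ⟨hg, hmartg⟩, hmapg⟩ := h2
    refine ⟨f ∘ g, ⟨hf.comp hg, ?_⟩, ?_⟩
    · intro A hA
      have hpre : (f ∘ g) ⁻¹' A = g ⁻¹' (f ⁻¹' A) := rfl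
      have hfA : MeasurableSet (f ⁻¹' A) := hf hA
      have e1 : ∫ y in g ⁻¹' (f ⁻¹' A), y ∂ν = ∫ y in g ⁻¹' (f ⁻¹' A), g y ∂ν :=
        hmartg (f ⁻¹' A) hfA
      have e2 : ∫ y in g ⁻¹' (f ⁻¹' A), g y ∂ν = ∫ x in f ⁻¹' A, x ∂μ := by
        rw [← hmapg, setIntegral_map (f := fun x => x) hfA measurable_id'.aestronglyMeasurable hg.aemeasurable]
      have e3 : ∫ x in f ⁻¹' A, x ∂μ = ∫ x in f ⁻¹' A, f x ∂μ := hmartf A hA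
      have e4 : ∫ x in f ⁻¹' A, f x ∂μ = ∫ y in g ⁻¹' (f ⁻¹' A), f (g y) ∂ν := by
        rw [← hmapg, setIntegral_map hfA hf.aestronglyMeasurable hg.aemeasurable]
      rw [hpre, e1, e2, e3, e4]
      rfl
    · rw [← Measure.map_map hf hg, hmapg, hmapf]
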